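/- Let $r \ge 2$ and let $A$ be a $(j,k)$-symmetric $r$-matrix of order $n_1 \times \cdots \times n_r$. Then $\|A\|_2 = \max |L_A(x^{(1)}, \ldots, x^{(r)})|$, where the maximum is taken over all vectors $x^{(1)} \in \mathbb{R}^{n_1}, \ldots, x^{(r)} \in \mathbb{R}^{n_r}$ with $|x^{(1)}|_2 = \cdots = |x^{(r)}|_2 = 1$ and additionally $x^{(j)} = x^{(k)}$. -/

import Mathlib

open Finset

/-- The `ℓ^p` norm of a vector in `ℝ^n`. -/
noncomputable def lpNorm {n : ℕ} (p : ℝ) (x : Fin n → ℝ) : ℝ :=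
  (∑ i, |x i| ^ p) ^ (1 / p)

/-- The linear form of an `r`-matrix `A` of order `n 0 × ⋯ × n (r-1)`:
`L_A(x⁽¹⁾, …, x⁽ʳ⁾) = ∑ a_{i₁,…,i_r} x⁽¹⁾_{i₁} ⋯ x⁽ʳ⁾_{i_r}`. -/
noncomputable def linForm {r : ℕ} {n : Fin r → ℕ} (A : (∀ t, Fin (n t)) → ℝ)
    (x : ∀ t, Fin (n t) → ℝ) : ℝ :=
  ∑ i : ∀ t, Fin (n t), A i * ∏ t, x t (i t)

/-- The index tuple obtained from `i` by swapping its `j`-th and `k`-th entries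
(given `n j = n k`). -/
def swapIdx {r : ℕ} {n : Fin r → ℕ} (j k : Fin r) (h : n j = n k)
    (i : ∀ t, Fin (n t)) : ∀ t, Fin (n t) := fun t =>
  if ht : t = j then Fin.cast (h.symm.trans (congrArg n ht).symm) (i k)
  else if ht' : t = k then Fin.cast (h.trans (congrArg n ht').symm) (i j)
  else i t

/-- The `p`-norm of an `r`-matrix:
`‖A‖_p = max {|L_A(x⁽¹⁾,…,x⁽ʳ⁾)| : |x⁽¹⁾|_p = ⋯ = |x⁽ʳ⁾|_p = 1}`. -/
noncomputable def hmNorm {r : ℕ} {n : Fin r → ℕ} (p : ℝ)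
    (A : (∀ t, Fin (n t)) → ℝ) : ℝ :=
  sSup {v | ∃ x : ∀ t, Fin (n t) → ℝ, (∀ t, lpNorm p (x t) = 1) ∧ v = |linForm A x|}

namespace Thr2
variable {r : ℕ} {n : Fin r → ℕ}

noncomputable def LM (A : (∀ t, Fin (n t)) → ℝ) :
    MultilinearMap ℝ (fun t : Fin r => Fin (n t) → ℝ) ℝ :=
  ∑ i : ∀ t, Fin (n t), A i •
    (MultilinearMap.mkPiAlgebra ℝ (Fin r) ℝ).compLinearMap (fun t => LinearMap.proj (i t))

lemma LM_apply (A : (∀ t, Fin (n t)) → ℝ) (x : ∀ t, Fin (n t) → ℝ) :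
    LM A x = linForm A x := by
  simp [LM, linForm]

lemma lpNorm_two_eq_one_iff {m : ℕ} (x : Fin m → ℝ) :
    lpNorm 2 x = 1 ↔ ∑ a, x a ^ 2 = 1 := by
  have h2 : ∀ a : Fin m, |x a| ^ (2:ℝ) = x a ^ 2 := by
    intro a
    rw [show (2:ℝ) = ((2:ℕ):ℝ) by norm_num, Real.rpow_natCast, sq_abs]
  unfold lpNorm
  simp only [h2]
  set s := ∑ a, x a ^ 2 with hs'
  have hs : (0:ℝ) ≤ s := Finset.sum_nonneg fun a _ => sq_nonneg _
  constructor
  · intro hx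
    have h3 : (s ^ (1/2:ℝ)) ^ (2:ℝ) = 1 ^ (2:ℝ) := by rw [hx]
    rw [← Real.rpow_mul hs] at h3
    norm_num at h3
    exact h3
  · intro hx
    rw [hx, Real.one_rpow]

variable (j k : Fin r) (h : n j = n k)

lemma swapIdx_apply_j (i : ∀ t, Fin (n t)) :
    swapIdx j k h i j = Fin.cast h.symm (i k) := by
  simp [swapIdx]

lemma swapIdx_apply_k (hjk : j ≠ k) (i : ∀ t, Fin (n t)) :
    swapIdx j k h i k = Fin.cast h (i j) := by
  simp [swapIdx, hjk.symm]

lemma swapIdx_apply_other (i : ∀ t, Fin (n t)) {t : Fin r} (htj : t ≠ j) (htk : t ≠ k) :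
    swapIdx j k h i t = i t := by
  simp [swapIdx, htj, htk]

lemma swapIdx_invol (hjk : j ≠ k) (i : ∀ t, Fin (n t)) :
    swapIdx j k h (swapIdx j k h i) = i := by
  funext t
  by_cases htj : t = j
  · rw [htj, swapIdx_apply_j, swapIdx_apply_k j k h hjk]
    exact Fin.ext (by simp)
  by_cases htk : t = k
  · rw [htk, swapIdx_apply_k j k h hjk, swapIdx_apply_j]
    exact Fin.ext (by simp)
  · rw [swapIdx_apply_other j k h _ htj htk, swapIdx_apply_other j k h _ htj htk]

lemma prod_split (hjk : j ≠ k) (y : ∀ t, Fin (n t) → ℝ) (i : ∀ t, Fin (n t)) :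
    ∏ t, y t (i t) =
      y j (i j) * (y k (i k) * ∏ t ∈ (univ.erase j).erase k, y t (i t)) := by
  rw [← Finset.mul_prod_erase univ _ (mem_univ j),
    ← Finset.mul_prod_erase _ _ (Finset.mem_erase.mpr ⟨hjk.symm, mem_univ k⟩)]

lemma symm_lemma (hjk : j ≠ k) (A : (∀ t, Fin (n t)) → ℝ)
    (hsym : ∀ i, A (swapIdx j k h i) = A i)
    (x : ∀ t, Fin (n t) → ℝ) (u : Fin (n j) → ℝ) (v : Fin (n k) → ℝ) :
    linForm A (Function.update (Function.update x k v) j u) =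
    linForm A (Function.update (Function.update x k (fun b => u (Fin.cast h.symm b))) j
      (fun a => v (Fin.cast h a))) := by
  unfold linForm
  refine Fintype.sum_bijective (swapIdx j k h)
    (Function.Involutive.bijective (swapIdx_invol j k h hjk)) _ _ ?_
  intro i
  rw [prod_split j k hjk, prod_split j k hjk, hsym i]
  rw [swapIdx_apply_j, swapIdx_apply_k j k h hjk]
  simp only [Function.update_self, Function.update_of_ne hjk.symm]
  have e1 : Fin.cast h (Fin.cast h.symm (i k)) = i k := Fin.ext (by simp)
  have e2 : Fin.cast h.symm (Fin.cast h (i j)) = i j := Fin.ext (by simp)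
  rw [e1, e2]
  have e3 : ∏ t ∈ (univ.erase j).erase k,
      (Function.update (Function.update x k v) j u) t (i t) =
      ∏ t ∈ (univ.erase j).erase k,
      (Function.update (Function.update x k (fun b => u (Fin.cast h.symm b))) j
        (fun a => v (Fin.cast h a))) t (swapIdx j k h i t) := by
    refine Finset.prod_congr rfl ?_
    intro t ht
    obtain ⟨htk, htj, -⟩ : t ≠ k ∧ t ≠ j ∧ True := by
      have h1 := Finset.mem_erase.mp ht
      have h2 := Finset.mem_erase.mp h1.2
      exact ⟨h1.1, h2.1, trivial⟩
    rw [swapIdx_apply_other j k h i htj htk,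
      Function.update_of_ne htj, Function.update_of_ne htk,
      Function.update_of_ne htj, Function.update_of_ne htk]
  rw [e3]
  ring

variable (A : (∀ t, Fin (n t)) → ℝ) (x : ∀ t, Fin (n t) → ℝ)

noncomputable def G (j k : Fin r) (A : (∀ t, Fin (n t)) → ℝ) (x : ∀ t, Fin (n t) → ℝ)
    (u : Fin (n j) → ℝ) (v : Fin (n k) → ℝ) : ℝ :=
  LM A (Function.update (Function.update x k v) j u)

lemma G_linForm (u : Fin (n j) → ℝ) (v : Fin (n k) → ℝ) :
    G j k A x u v = linForm A (Function.update (Function.update x k v) j u) :=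
  LM_apply _ _

lemma G_add_left (u₁ u₂ : Fin (n j) → ℝ) (v : Fin (n k) → ℝ) :
    G j k A x (u₁ + u₂) v = G j k A x u₁ v + G j k A x u₂ v :=
  MultilinearMap.map_update_add _ _ _ _ _

lemma G_sub_left (u₁ u₂ : Fin (n j) → ℝ) (v : Fin (n k) → ℝ) :
    G j k A x (u₁ - u₂) v = G j k A x u₁ v - G j k A x u₂ v :=
  MultilinearMap.map_update_sub _ _ _ _ _

lemma G_smul_left (c : ℝ) (u : Fin (n j) → ℝ) (v : Fin (n k) → ℝ) :
    G j k A x (c • u) v = c * G j k A x u v :=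
  MultilinearMap.map_update_smul _ _ _ _ _

lemma G_comm (hjk : j ≠ k) (u : Fin (n j) → ℝ) (v : Fin (n k) → ℝ) :
    G j k A x u v = G k j A x v u := by
  unfold G
  rw [Function.update_comm hjk.symm]

lemma G_add_right (hjk : j ≠ k) (u : Fin (n j) → ℝ) (v₁ v₂ : Fin (n k) → ℝ) :
    G j k A x u (v₁ + v₂) = G j k A x u v₁ + G j k A x u v₂ := by
  rw [G_comm j k A x hjk, G_comm j k A x hjk u v₁, G_comm j k A x hjk u v₂]
  exact G_add_left k j A x v₁ v₂ u

lemma G_sub_right (hjk : j ≠ k) (u : Fin (n j) → ℝ) (v₁ v₂ : Fin (n k) → ℝ) :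
    G j k A x u (v₁ - v₂) = G j k A x u v₁ - G j k A x u v₂ := by
  rw [G_comm j k A x hjk, G_comm j k A x hjk u v₁, G_comm j k A x hjk u v₂]
  exact G_sub_left k j A x v₁ v₂ u

lemma G_smul_right (hjk : j ≠ k) (c : ℝ) (u : Fin (n j) → ℝ) (v : Fin (n k) → ℝ) :
    G j k A x u (c • v) = c * G j k A x u v := by
  rw [G_comm j k A x hjk, G_comm j k A x hjk u v]
  exact G_smul_left k j A x c v u

lemma G_zero_left (v : Fin (n k) → ℝ) : G j k A x 0 v = 0 :=
  MultilinearMap.map_coord_zero _ j (by simp)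

noncomputable def Q (j k : Fin r) (h : n j = n k) (A : (∀ t, Fin (n t)) → ℝ)
    (x : ∀ t, Fin (n t) → ℝ) (w : Fin (n j) → ℝ) : ℝ :=
  G j k A x w (fun b => w (Fin.cast h.symm b))

lemma Q_smul (hjk : j ≠ k) (c : ℝ) (w : Fin (n j) → ℝ) :
    Q j k h A x (c • w) = c ^ 2 * Q j k h A x w := by
  unfold Q
  have e : (fun b => (c • w) (Fin.cast h.symm b)) = c • (fun b => w (Fin.cast h.symm b)) := rfl
  rw [e, G_smul_left, G_smul_right j k A x hjk]
  ring

lemma Q_zero : Q j k h A x 0 = 0 := by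
  unfold Q
  have e : (fun b => (0 : Fin (n j) → ℝ) (Fin.cast h.symm b)) = (0 : Fin (n k) → ℝ) := rfl
  rw [e]
  exact G_zero_left j k A x 0

lemma Q_bound (hjk : j ≠ k) (M : ℝ)
    (hQM : ∀ w : Fin (n j) → ℝ, (∑ a, w a ^ 2) = 1 → |Q j k h A x w| ≤ M)
    (w : Fin (n j) → ℝ) :
    |Q j k h A x w| ≤ (∑ a, w a ^ 2) * M := by
  rcases eq_or_ne (∑ a, w a ^ 2) 0 with hz | hz
  · have hw0 : w = 0 := by
      funext a
      have := (Finset.sum_eq_zero_iff_of_nonneg (fun a _ => sq_nonneg (w a))).mp hz a (mem_univ a)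
      exact pow_eq_zero_iff (two_ne_zero) |>.mp this
    rw [hw0, Q_zero]
    simp
  · have hnn : (0:ℝ) ≤ ∑ a, w a ^ 2 := Finset.sum_nonneg fun a _ => sq_nonneg _
    have hpos : (0:ℝ) < ∑ a, w a ^ 2 := lt_of_le_of_ne hnn (Ne.symm hz)
    set s := Real.sqrt (∑ a, w a ^ 2) with hs
    have hs0 : 0 < s := Real.sqrt_pos.mpr hpos
    have hs2 : s ^ 2 = ∑ a, w a ^ 2 := Real.sq_sqrt hnn
    have hw' : ∑ a, (s⁻¹ • w) a ^ 2 = 1 := by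
      have : ∀ a : Fin (n j), (s⁻¹ • w) a ^ 2 = s⁻¹ ^ 2 * w a ^ 2 := by
        intro a; simp [mul_pow]
      rw [Finset.sum_congr rfl (fun a _ => this a), ← Finset.mul_sum, ← hs2]
      field_simp
    have hws : w = s • (s⁻¹ • w) := by
      rw [smul_smul, mul_inv_cancel₀ hs0.ne', one_smul]
    calc |Q j k h A x w| = |Q j k h A x (s • (s⁻¹ • w))| := by rw [← hws]
      _ = s ^ 2 * |Q j k h A x (s⁻¹ • w)| := by
          rw [Q_smul j k h A x hjk, abs_mul, abs_of_nonneg (sq_nonneg s)]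
      _ ≤ s ^ 2 * M := mul_le_mul_of_nonneg_left (hQM _ hw') (sq_nonneg s)
      _ = (∑ a, w a ^ 2) * M := by rw [hs2]

lemma polarization (hjk : j ≠ k) (hsym : ∀ i, A (swapIdx j k h i) = A i)
    (u : Fin (n j) → ℝ) (v : Fin (n k) → ℝ) :
    Q j k h A x (u + fun a => v (Fin.cast h a)) - Q j k h A x (u - fun a => v (Fin.cast h a)) =
      4 * G j k A x u v := by
  set ut : Fin (n j) → ℝ := fun a => v (Fin.cast h a) with hut
  set us : Fin (n k) → ℝ := fun b => u (Fin.cast h.symm b) with hus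
  have e1 : (fun b => (u + ut) (Fin.cast h.symm b)) = us + v := by
    funext b
    have : ut (Fin.cast h.symm b) = v b := congrArg v (Fin.ext (by simp))
    simp [Pi.add_apply, hus, this]
  have e2 : (fun b => (u - ut) (Fin.cast h.symm b)) = us - v := by
    funext b
    have : ut (Fin.cast h.symm b) = v b := congrArg v (Fin.ext (by simp))
    simp [Pi.sub_apply, hus, this]
  have hsymG : G j k A x u v = G j k A x ut us := by
    rw [G_linForm, G_linForm]
    exact symm_lemma j k h hjk A hsym x u v
  unfold Q
  rw [e1, e2, G_add_left, G_sub_left,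
    G_add_right j k A x hjk, G_add_right j k A x hjk,
    G_sub_right j k A x hjk, G_sub_right j k A x hjk, ← hsymG]
  ring

lemma key (hjk : j ≠ k) (hsym : ∀ i, A (swapIdx j k h i) = A i) (M : ℝ)
    (hQM : ∀ w : Fin (n j) → ℝ, (∑ a, w a ^ 2) = 1 → |Q j k h A x w| ≤ M)
    (hxj : ∑ a, x j a ^ 2 = 1) (hxk : ∑ a, x k a ^ 2 = 1) :
    |linForm A x| ≤ M := by
  set ut : Fin (n j) → ℝ := fun a => x k (Fin.cast h a) with hut
  have hnt : ∑ a, ut a ^ 2 = 1 := by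
    rw [← hxk]
    exact Fintype.sum_bijective (finCongr h) (finCongr h).bijective _ _ (fun a => rfl)
  have hsum : (∑ a, (x j + ut) a ^ 2) + (∑ a, (x j - ut) a ^ 2) = 4 := by
    rw [← Finset.sum_add_distrib]
    have e : ∀ a : Fin (n j), (x j + ut) a ^ 2 + (x j - ut) a ^ 2
        = 2 * (x j a ^ 2) + 2 * (ut a ^ 2) := by
      intro a; simp only [Pi.add_apply, Pi.sub_apply]; ring
    rw [Finset.sum_congr rfl (fun a _ => e a), Finset.sum_add_distrib,
      ← Finset.mul_sum, ← Finset.mul_sum, hxj, hnt]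
    norm_num
  have hb1 := Q_bound j k h A x hjk M hQM (x j + ut)
  have hb2 := Q_bound j k h A x hjk M hQM (x j - ut)
  have hpol := polarization j k h A x hjk hsym (x j) (x k)
  rw [← hut] at hpol
  have hGx : G j k A x (x j) (x k) = linForm A x := by
    rw [G_linForm, Function.update_eq_self, Function.update_eq_self]
  have habs : 4 * |linForm A x| ≤ 4 * M := by
    calc 4 * |linForm A x|
        = |Q j k h A x (x j + ut) - Q j k h A x (x j - ut)| := by
          rw [hpol, hGx, abs_mul]; norm_num
      _ ≤ |Q j k h A x (x j + ut)| + |Q j k h A x (x j - ut)| := abs_sub _ _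
      _ ≤ (∑ a, (x j + ut) a ^ 2) * M + (∑ a, (x j - ut) a ^ 2) * M := add_le_add hb1 hb2
      _ = 4 * M := by rw [← add_mul, hsum]
  linarith

end Thr2

/-- **Theorem 2 (thr2).** If `A` is a `(j,k)`-symmetric `r`-matrix (`r ≥ 2`), then its
`2`-norm is attained by restricting to tuples of unit vectors with `x⁽ʲ⁾ = x⁽ᵏ⁾`. -/
theorem twoNorm_eq_max_with_equal_coords {r : ℕ} (hr : 2 ≤ r) {n : Fin r → ℕ}
    (j k : Fin r) (hjk : j ≠ k) (h : n j = n k)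
    (A : (∀ t, Fin (n t)) → ℝ)
    (hsym : ∀ i, A (swapIdx j k h i) = A i) :
    hmNorm 2 A = sSup {v | ∃ x : ∀ t, Fin (n t) → ℝ,
      (∀ t, lpNorm 2 (x t) = 1) ∧ (∀ a : Fin (n j), x j a = x k (Fin.cast h a)) ∧
      v = |linForm A x|} := by
  classical
  unfold hmNorm
  set S := {v | ∃ x : ∀ t, Fin (n t) → ℝ,
      (∀ t, lpNorm 2 (x t) = 1) ∧ (∀ a : Fin (n j), x j a = x k (Fin.cast h a)) ∧
      v = |linForm A x|} with hSdef
  set T := {v | ∃ x : ∀ t, Fin (n t) → ℝ, (∀ t, lpNorm 2 (x t) = 1) ∧ v = |linForm A x|}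
    with hTdef
  by_cases hn : ∀ t, 0 < n t
  · -- the generic case
    -- uniform bound
    have hone : ∀ (x : ∀ t, Fin (n t) → ℝ), (∀ t, lpNorm 2 (x t) = 1) →
        ∀ t (a : Fin (n t)), |x t a| ≤ 1 := by
      intro x hx t a
      have hs := (Thr2.lpNorm_two_eq_one_iff (x t)).mp (hx t)
      have h1 : x t a ^ 2 ≤ 1 := by
        rw [← hs]
        exact Finset.single_le_sum (fun b _ => sq_nonneg (x t b)) (mem_univ a)
      nlinarith [abs_nonneg (x t a), sq_abs (x t a)]
    have hC : ∀ v ∈ T, v ≤ ∑ i : ∀ t, Fin (n t), |A i| := by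
      rintro v ⟨x, hx, rfl⟩
      calc |linForm A x| ≤ ∑ i : ∀ t, Fin (n t), |A i * ∏ t, x t (i t)| :=
            Finset.abs_sum_le_sum_abs _ _
        _ ≤ ∑ i : ∀ t, Fin (n t), |A i| := by
            apply Finset.sum_le_sum
            intro i _
            rw [abs_mul]
            have hp : |∏ t, x t (i t)| ≤ 1 := by
              rw [Finset.abs_prod]
              exact Finset.prod_le_one (fun t _ => abs_nonneg _)
                (fun t _ => hone x hx t (i t))
            calc |A i| * |∏ t, x t (i t)| ≤ |A i| * 1 :=
                  mul_le_mul_of_nonneg_left hp (abs_nonneg _)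
              _ = |A i| := mul_one _
    have hST : S ⊆ T := by
      rintro v ⟨x, h1, _, h3⟩
      exact ⟨x, h1, h3⟩
    -- the standard basis tuple
    have hSne : S.Nonempty := by
      refine ⟨_, fun t => fun a => if a = (⟨0, hn t⟩ : Fin (n t)) then (1:ℝ) else 0, ?_, ?_, rfl⟩
      · intro t
        rw [Thr2.lpNorm_two_eq_one_iff]
        have e : ∀ a : Fin (n t),
            (if a = (⟨0, hn t⟩ : Fin (n t)) then (1:ℝ) else 0) ^ 2
              = if a = (⟨0, hn t⟩ : Fin (n t)) then (1:ℝ) else 0 := by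
          intro a; split <;> norm_num
        rw [Finset.sum_congr rfl (fun a _ => e a)]
        simp
      · intro a
        simp only [Fin.ext_iff, Fin.coe_cast]
    have hSbdd : BddAbove S := ⟨_, fun v hv => hC v (hST hv)⟩
    have hTbdd : BddAbove T := ⟨_, hC⟩
    have hM0 : 0 ≤ sSup S := by
      obtain ⟨v0, hv0⟩ := hSne
      have h0 : 0 ≤ v0 := by
        obtain ⟨x0, -, -, h3⟩ := hv0
        exact h3 ▸ abs_nonneg _
      exact h0.trans (le_csSup hSbdd hv0)
    apply le_antisymm
    · apply Real.sSup_le _ hM0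
      rintro v ⟨x, hx, rfl⟩
      apply Thr2.key j k h A x hjk hsym (sSup S) _
        ((Thr2.lpNorm_two_eq_one_iff (x j)).mp (hx j))
        ((Thr2.lpNorm_two_eq_one_iff (x k)).mp (hx k))
      intro w hw
      set y : ∀ t, Fin (n t) → ℝ :=
        Function.update (Function.update x k (fun b => w (Fin.cast h.symm b))) j w with hy
      have hQy : Thr2.Q j k h A x w = linForm A y := Thr2.G_linForm j k A x _ _
      rw [hQy]
      apply le_csSup hSbdd
      refine ⟨y, ?_, ?_, rfl⟩
      · intro t
        by_cases htj : t = j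
        · subst htj
          rw [Thr2.lpNorm_two_eq_one_iff]
          have : y t = w := Function.update_self _ _ _
          rw [this, hw]
        · by_cases htk : t = k
          · subst htk
            rw [Thr2.lpNorm_two_eq_one_iff]
            have e : y t = fun b => w (Fin.cast h.symm b) := by
              rw [hy, Function.update_of_ne htj, Function.update_self]
            rw [e, ← hw]
            exact Fintype.sum_bijective (finCongr h.symm) (finCongr h.symm).bijective _ _
              (fun b => rfl)
          · have e : y t = x t := by
              rw [hy, Function.update_of_ne htj, Function.update_of_ne htk]
            rw [e]
            exact hx t
      · intro a
        have ej : y j = w := Function.update_self _ _ _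
        have ek : y k = fun b => w (Fin.cast h.symm b) := by
          rw [hy, Function.update_of_ne hjk.symm, Function.update_self]
        rw [ej, ek]
        exact (congrArg w (Fin.ext (by simp))).symm
    · exact csSup_le_csSup hTbdd hSne hST
  · -- degenerate case: some n t = 0
    push_neg at hn
    obtain ⟨t0, ht0⟩ := hn
    have ht0' : n t0 = 0 := Nat.le_zero.mp ht0
    haveI : IsEmpty (Fin (n t0)) := by rw [ht0']; infer_instance
    have hno : ∀ (x : ∀ t, Fin (n t) → ℝ), ¬ (∀ t, lpNorm 2 (x t) = 1) := by
      intro x hx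
      have := hx t0
      rw [lpNorm] at this
      simp only [Finset.univ_eq_empty, Finset.sum_empty] at this
      rw [Real.zero_rpow (by norm_num)] at this
      exact zero_ne_one this
    have hTe : T = ∅ := by
      ext v
      simp only [hTdef, Set.mem_setOf_eq, Set.mem_empty_iff_false, iff_false]
      rintro ⟨x, hx, -⟩
      exact hno x hx
    have hSe : S = ∅ := by
      ext v
      simp only [hSdef, Set.mem_setOf_eq, Set.mem_empty_iff_false, iff_false]
      rintro ⟨x, hx, -, -⟩
      exact hno x hx
    rw [hTe, hSe]
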